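/- Let F be a field of characteristic not 2, and let g be the 3-dimensional Heisenberg-type Lie algebra over F with basis y, z, h and relations [y,z] = h, [y,h] = 0, [z,h] = 0. Let U(g) be its universal enveloping algebra, and let a be the left ideal of U(g) generated by y^2 and z. Then U(g)/a is 3-dimensional over F, spanned by the images of 1, y, and zy. -/

import Mathlib

open scoped Matrix

private lemma heisYZ (F : Type) [Field F] :
    (!![0,0,0; 1,0,0; 0,0,0] : Matrix (Fin 3) (Fin 3) F) * !![0,0,0; 0,0,0; 0,1,0]
      - !![0,0,0; 0,0,0; 0,1,0] * !![0,0,0; 1,0,0; 0,0,0] = !![0,0,0; 0,0,0; -1,0,0] := by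
  ext i j
  fin_cases i <;> fin_cases j <;>
    simp [Matrix.mul_apply, Fin.sum_univ_three, Matrix.vecHead, Matrix.vecTail]

private lemma heisYH (F : Type) [Field F] :
    (!![0,0,0; 1,0,0; 0,0,0] : Matrix (Fin 3) (Fin 3) F) * !![0,0,0; 0,0,0; -1,0,0]
      - !![0,0,0; 0,0,0; -1,0,0] * !![0,0,0; 1,0,0; 0,0,0] = 0 := by
  ext i j
  fin_cases i <;> fin_cases j <;>
    simp [Matrix.mul_apply, Fin.sum_univ_three, Matrix.vecHead, Matrix.vecTail]

private lemma heisZH (F : Type) [Field F] :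
    (!![0,0,0; 0,0,0; 0,1,0] : Matrix (Fin 3) (Fin 3) F) * !![0,0,0; 0,0,0; -1,0,0]
      - !![0,0,0; 0,0,0; -1,0,0] * !![0,0,0; 0,0,0; 0,1,0] = 0 := by
  ext i j
  fin_cases i <;> fin_cases j <;>
    simp [Matrix.mul_apply, Fin.sum_univ_three, Matrix.vecHead, Matrix.vecTail]

private lemma heisYv (F : Type) [Field F] :
    (!![0,0,0; 1,0,0; 0,0,0] : Matrix (Fin 3) (Fin 3) F) *ᵥ ![(1:F),0,0] = ![0,1,0] := by
  funext i; fin_cases i <;>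
    simp [Matrix.mulVec, dotProduct, Fin.sum_univ_three, Matrix.vecHead, Matrix.vecTail]

private lemma heisYe1 (F : Type) [Field F] :
    (!![0,0,0; 1,0,0; 0,0,0] : Matrix (Fin 3) (Fin 3) F) *ᵥ ![(0:F),1,0] = 0 := by
  funext i; fin_cases i <;>
    simp [Matrix.mulVec, dotProduct, Fin.sum_univ_three, Matrix.vecHead, Matrix.vecTail]

private lemma heisZv0 (F : Type) [Field F] :
    (!![0,0,0; 0,0,0; 0,1,0] : Matrix (Fin 3) (Fin 3) F) *ᵥ ![(1:F),0,0] = 0 := by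
  funext i; fin_cases i <;>
    simp [Matrix.mulVec, dotProduct, Fin.sum_univ_three, Matrix.vecHead, Matrix.vecTail]

private lemma heisZe1 (F : Type) [Field F] :
    (!![0,0,0; 0,0,0; 0,1,0] : Matrix (Fin 3) (Fin 3) F) *ᵥ ![(0:F),1,0] = ![0,0,1] := by
  funext i; fin_cases i <;>
    simp [Matrix.mulVec, dotProduct, Fin.sum_univ_three, Matrix.vecHead, Matrix.vecTail]



/-
STATEMENT 2: Let `F` be a field of characteristic ≠ 2 and `g` the
3-dimensional Heisenberg-type Lie algebra over `F` with basis `y, z, h`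
and relations `[y,z] = h`, `[y,h] = 0`, `[z,h] = 0`.  Let `U(g)` be its
universal enveloping algebra and `a` the left ideal of `U(g)` generated by
`y²` and `z`.  Then `U(g)/a` is 3-dimensional over `F`, spanned by the
images of `1`, `y` and `zy`. -/
attribute [local instance] LieRing.ofAssociativeRing

set_option maxHeartbeats 1600000 in
theorem stmt2 (F : Type) [Field F] (hchar : ringChar F ≠ 2)
    (L : Type) [LieRing L] [LieAlgebra F L]
    (y z h : L)
    (hbasis₁ : LinearIndependent F ![y, z, h])
    (hbasis₂ : Submodule.span F {y, z, h} = ⊤)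
    (hyz : ⁅y, z⁆ = h) (hyh : ⁅y, h⁆ = 0) (hzh : ⁅z, h⁆ = 0) :
    letI U := UniversalEnvelopingAlgebra F L
    letI ι : L →ₗ⁅F⁆ U := UniversalEnvelopingAlgebra.ι F
    letI a : Submodule U U := Submodule.span U {ι y * ι y, ι z}
    Module.finrank F (U ⧸ a) = 3 ∧
      Submodule.span F {Submodule.Quotient.mk (p := a) 1,
        Submodule.Quotient.mk (p := a) (ι y),
        Submodule.Quotient.mk (p := a) (ι z * ι y)} = ⊤ := by
  classical
  have htwo : (2 : F) ≠ 0 := Ring.two_ne_zero hchar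
  show Module.finrank F _ = 3 ∧ Submodule.span F _ = ⊤
  set s : UniversalEnvelopingAlgebra F L := UniversalEnvelopingAlgebra.ι F y with hsdef
  set t : UniversalEnvelopingAlgebra F L := UniversalEnvelopingAlgebra.ι F z with htdef
  set k : UniversalEnvelopingAlgebra F L := UniversalEnvelopingAlgebra.ι F h with hkdef
  set a : Submodule (UniversalEnvelopingAlgebra F L) (UniversalEnvelopingAlgebra F L) :=
    Submodule.span _ {s * s, t} with hadef
  -- basic relations coming from the Lie algebra structure
  have rel1 : s * t - t * s = k := by
    have h1 := (UniversalEnvelopingAlgebra.ι F (L := L)).map_lie y z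
    rw [hyz, Ring.lie_def] at h1
    exact h1.symm
  have rel2' : s * k = k * s := by
    have h1 := (UniversalEnvelopingAlgebra.ι F (L := L)).map_lie y h
    rw [hyh, Ring.lie_def, map_zero] at h1
    exact sub_eq_zero.mp h1.symm
  have rel3' : t * k = k * t := by
    have h1 := (UniversalEnvelopingAlgebra.ι F (L := L)).map_lie z h
    rw [hzh, Ring.lie_def, map_zero] at h1
    exact sub_eq_zero.mp h1.symm
  -- memberships in the left ideal a
  have hmul_t : ∀ u : UniversalEnvelopingAlgebra F L, u * t ∈ a := fun u => by
    simpa [smul_eq_mul] using a.smul_mem u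
      (Submodule.subset_span (Set.mem_insert_of_mem _ rfl))
  have hmul_ss : ∀ u : UniversalEnvelopingAlgebra F L, u * (s * s) ∈ a := fun u => by
    simpa [smul_eq_mul] using a.smul_mem u (Submodule.subset_span (Set.mem_insert _ _))
  have hamul : ∀ (u : UniversalEnvelopingAlgebra F L) {w : UniversalEnvelopingAlgebra F L},
      w ∈ a → u * w ∈ a := fun u w hw => by
    simpa [smul_eq_mul] using a.smul_mem u hw
  have hss : s * s ∈ a := by simpa using hmul_ss 1
  have ht : t ∈ a := by simpa using hmul_t 1
  have hsts : s * (t * s) ∈ a := by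
    have h1 : s * (s * t) - s * (t * s) = s * (t * s) - t * (s * s) := by
      calc s * (s * t) - s * (t * s) = s * (s * t - t * s) := by rw [mul_sub]
        _ = s * k := by rw [rel1]
        _ = k * s := rel2'
        _ = (s * t - t * s) * s := by rw [rel1]
        _ = s * (t * s) - t * (s * s) := by rw [sub_mul, mul_assoc, mul_assoc]
    have e : s * (t * s) + s * (t * s) = s * (s * t) + t * (s * s) :=
      (sub_eq_sub_iff_add_eq_add.mp h1).symm
    have hmem : s * (t * s) + s * (t * s) ∈ a := by
      rw [e]
      exact a.add_mem (by rw [← mul_assoc]; exact hmul_t (s * s)) (hamul t hss)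
    have h2 : ((2 : F) • (s * (t * s))) ∈ a := by rwa [← two_smul F] at hmem
    have h3 := Submodule.smul_of_tower_mem a (2 : F)⁻¹ h2
    rwa [smul_smul, inv_mul_cancel₀ htwo, one_smul] at h3
  have hks : k * s ∈ a := by
    have e : k * s = s * (t * s) - t * (s * s) := by
      rw [← rel1, sub_mul, mul_assoc, mul_assoc]
    rw [e]; exact a.sub_mem hsts (hamul t hss)
  have hkts : k * (t * s) ∈ a := by
    have e : k * (t * s) = t * (k * s) := by rw [← mul_assoc, ← rel3', mul_assoc]
    rw [e]; exact hamul t hks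
  have hkt_mem : k * t ∈ a := by
    rw [← rel1, sub_mul]
    exact a.sub_mem (hmul_t (s * t)) (hmul_t (t * s))
  have htts : t * (t * s) ∈ a := by
    have e : t * (t * s) = t * (s * t) - t * k := by
      calc t * (t * s) = t * (s * t - (s * t - t * s)) := by rw [sub_sub_cancel]
        _ = t * (s * t) - t * (s * t - t * s) := by rw [mul_sub]
        _ = t * (s * t) - t * k := by rw [rel1]
    rw [e]
    refine a.sub_mem (by rw [← mul_assoc]; exact hmul_t (t * s)) ?_
    rw [rel3']; exact hkt_mem
  -- the F-submodule W
  set W : Submodule F (UniversalEnvelopingAlgebra F L) :=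
    Submodule.restrictScalars F a ⊔ Submodule.span F {1, s, t * s} with hWdef
  have haW : ∀ {u : UniversalEnvelopingAlgebra F L}, u ∈ a → u ∈ W :=
    fun hu => Submodule.mem_sup_left hu
  have hspW : ∀ {u : UniversalEnvelopingAlgebra F L},
      u ∈ Submodule.span F {1, s, t * s} → u ∈ W := fun hu => Submodule.mem_sup_right hu
  have hW1 : (1 : UniversalEnvelopingAlgebra F L) ∈ W := hspW (Submodule.subset_span (by simp))
  have hWs : s ∈ W := hspW (Submodule.subset_span (by simp))
  have hWts : t * s ∈ W := hspW (Submodule.subset_span (by simp))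
  have hWk : k ∈ W := by
    rw [← rel1]
    exact W.sub_mem (haW (hmul_t s)) hWts
  have key : ∀ g : UniversalEnvelopingAlgebra F L,
      g ∈ W → g * s ∈ W → g * (t * s) ∈ W → ∀ w ∈ W, g * w ∈ W := by
    intro g hg1 hg2 hg3 w hw
    rcases Submodule.mem_sup.mp hw with ⟨u, hu, v, hv, rfl⟩
    rw [mul_add]
    refine W.add_mem (haW (hamul g hu)) ?_
    refine Submodule.span_induction (p := fun v _ => g * v ∈ W) ?_ ?_ ?_ ?_ hv
    · intro x hx
      simp only [Set.mem_insert_iff, Set.mem_singleton_iff] at hx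
      rcases hx with rfl | rfl | rfl
      · simpa using hg1
      · exact hg2
      · exact hg3
    · simpa using W.zero_mem
    · intro x₁ x₂ _ _ hx₁ hx₂; rw [mul_add]; exact W.add_mem hx₁ hx₂
    · intro c x _ hx; rw [mul_smul_comm]; exact W.smul_mem c hx
  have hιW : ∀ x : L, ∀ w ∈ W, (UniversalEnvelopingAlgebra.ι F x) * w ∈ W := by
    have hx' : ∀ x : L, x ∈ Submodule.span F ({y, z, h} : Set L) := by
      intro x; rw [hbasis₂]; trivial
    intro x
    refine Submodule.span_induction
      (p := fun x _ => ∀ w ∈ W, (UniversalEnvelopingAlgebra.ι F x) * w ∈ W) ?_ ?_ ?_ ?_ (hx' x)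
    · intro x hx
      simp only [Set.mem_insert_iff, Set.mem_singleton_iff] at hx
      rcases hx with rfl | rfl | rfl
      · exact key s hWs (haW hss) (haW hsts)
      · exact key t (haW ht) hWts (haW htts)
      · exact key k hWk (haW hks) (haW hkts)
    · intro w hw; rw [map_zero, zero_mul]; exact W.zero_mem
    · intro x₁ x₂ _ _ h₁ h₂ w hw; rw [map_add, add_mul]
      exact W.add_mem (h₁ w hw) (h₂ w hw)
    · intro c x _ hx w hw
      rw [map_smul, smul_mul_assoc]
      exact W.smul_mem c (hx w hw)
  have hmulW : ∀ u : UniversalEnvelopingAlgebra F L, ∀ w ∈ W, u * w ∈ W := by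
    have hsurj : Function.Surjective (UniversalEnvelopingAlgebra.mkAlgHom F L) :=
      RingCon.mkₐ_surjective (α := F) _
    intro u
    obtain ⟨p, rfl⟩ := hsurj u
    induction p using TensorAlgebra.induction with
    | algebraMap r =>
      intro w hw
      rw [AlgHom.commutes, ← Algebra.smul_def]
      exact W.smul_mem r hw
    | ι x =>
      intro w hw
      rw [← UniversalEnvelopingAlgebra.ι_apply]
      exact hιW x w hw
    | mul p q hp hq =>
      intro w hw
      rw [map_mul, mul_assoc]
      exact hp _ (hq w hw)
    | add p q hp hq =>
      intro w hw
      rw [map_add, add_mul]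
      exact W.add_mem (hp w hw) (hq w hw)
  have hWtop : ∀ u : UniversalEnvelopingAlgebra F L, u ∈ W := fun u => by
    simpa using hmulW u 1 hW1
  -- the spanning statement
  have hspan_top : Submodule.span F
      {Submodule.Quotient.mk (p := a) 1, Submodule.Quotient.mk (p := a) s,
        Submodule.Quotient.mk (p := a) (t * s)} = ⊤ := by
    rw [eq_top_iff]
    rintro q -
    obtain ⟨u, rfl⟩ := Submodule.Quotient.mk_surjective a q
    rcases Submodule.mem_sup.mp (hWtop u) with ⟨x, hx, v, hv, rfl⟩
    rw [Submodule.Quotient.mk_add, (Submodule.Quotient.mk_eq_zero a).mpr hx, zero_add]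
    refine Submodule.span_induction (p := fun v _ => Submodule.Quotient.mk (p := a) v ∈
      Submodule.span F {Submodule.Quotient.mk (p := a) 1, Submodule.Quotient.mk (p := a) s,
        Submodule.Quotient.mk (p := a) (t * s)}) ?_ ?_ ?_ ?_ hv
    · intro w hw
      simp only [Set.mem_insert_iff, Set.mem_singleton_iff] at hw
      rcases hw with rfl | rfl | rfl
      · exact Submodule.subset_span (by simp)
      · exact Submodule.subset_span (by simp)
      · exact Submodule.subset_span (by simp)
    · simp
    · intro x₁ x₂ _ _ h₁ h₂; rw [Submodule.Quotient.mk_add]; exact Submodule.add_mem _ h₁ h₂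
    · intro c x _ hx; rw [Submodule.Quotient.mk_smul]; exact Submodule.smul_mem _ c hx
  -- a 3-dimensional representation
  set Ym : Matrix (Fin 3) (Fin 3) F := !![0,0,0; 1,0,0; 0,0,0] with hYm
  set Zm : Matrix (Fin 3) (Fin 3) F := !![0,0,0; 0,0,0; 0,1,0] with hZm
  set Hm : Matrix (Fin 3) (Fin 3) F := !![0,0,0; 0,0,0; -1,0,0] with hHm
  have hrange : Set.range ![y, z, h] = {y, z, h} := by
    ext w
    constructor
    · rintro ⟨i, rfl⟩; fin_cases i <;> simp
    · intro hw
      simp only [Set.mem_insert_iff, Set.mem_singleton_iff] at hw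
      rcases hw with rfl | rfl | rfl
      exacts [⟨0, rfl⟩, ⟨1, rfl⟩, ⟨2, rfl⟩]
  set b : Module.Basis (Fin 3) F L :=
    Module.Basis.mk hbasis₁ (by rw [hrange, hbasis₂]) with hb
  set f : L →ₗ[F] Matrix (Fin 3) (Fin 3) F := b.constr F ![Ym, Zm, Hm] with hf
  have hfy : f y = Ym := by
    have h0 := b.constr_basis F ![Ym, Zm, Hm] 0
    simpa [hb, hf, Module.Basis.mk_apply] using h0
  have hfz : f z = Zm := by
    have h0 := b.constr_basis F ![Ym, Zm, Hm] 1
    simpa [hb, hf, Module.Basis.mk_apply] using h0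
  have hfh : f h = Hm := by
    have h0 := b.constr_basis F ![Ym, Zm, Hm] 2
    simpa [hb, hf, Module.Basis.mk_apply] using h0
  have mYZ : Ym * Zm - Zm * Ym = Hm := by
    rw [hYm, hZm, hHm]; exact heisYZ F
  have mYH : Ym * Hm - Hm * Ym = 0 := by
    rw [hYm, hHm]; exact heisYH F
  have mZH : Zm * Hm - Hm * Zm = 0 := by
    rw [hZm, hHm]; exact heisZH F
  have hmemL : ∀ x : L, x ∈ Submodule.span F ({y, z, h} : Set L) := by
    intro x; rw [hbasis₂]; trivial
  have hbr : ∀ x1 x2 : L, f ⁅x1, x2⁆ = f x1 * f x2 - f x2 * f x1 := by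
    intro x1
    refine Submodule.span_induction
      (p := fun x1 _ => ∀ x2, f ⁅x1, x2⁆ = f x1 * f x2 - f x2 * f x1) ?_ ?_ ?_ ?_ (hmemL x1)
    · intro w hw x2
      refine Submodule.span_induction
        (p := fun x2 _ => f ⁅w, x2⁆ = f w * f x2 - f x2 * f w) ?_ ?_ ?_ ?_ (hmemL x2)
      · intro v hv
        simp only [Set.mem_insert_iff, Set.mem_singleton_iff] at hw hv
        have hzy : ⁅z, y⁆ = -h := by rw [← lie_skew, hyz]
        have hhy : ⁅h, y⁆ = 0 := by rw [← lie_skew, hyh, neg_zero]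
        have hhz : ⁅h, z⁆ = 0 := by rw [← lie_skew, hzh, neg_zero]
        rcases hw with rfl | rfl | rfl <;> rcases hv with rfl | rfl | rfl
        · rw [lie_self, map_zero, sub_self]
        · rw [hyz, hfy, hfz, hfh, mYZ]
        · rw [hyh, map_zero, hfy, hfh, mYH]
        · rw [hzy, map_neg, hfy, hfz, hfh, ← neg_sub, mYZ]
        · rw [lie_self, map_zero, sub_self]
        · rw [hzh, map_zero, hfz, hfh, mZH]
        · rw [hhy, map_zero, hfy, hfh, ← neg_sub (Ym * Hm), mYH, neg_zero]
        · rw [hhz, map_zero, hfz, hfh, ← neg_sub (Zm * Hm), mZH, neg_zero]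
        · rw [lie_self, map_zero, sub_self]
      · simp
      · intro a₁ a₂ _ _ h₁ h₂
        rw [lie_add, map_add, h₁, h₂, map_add]
        noncomm_ring
      · intro c v _ hv
        rw [lie_smul, map_smul, hv, map_smul, smul_sub, mul_smul_comm, smul_mul_assoc]
    · intro x2; simp
    · intro a₁ a₂ _ _ h₁ h₂ x2
      rw [add_lie, map_add, h₁ x2, h₂ x2, map_add]
      noncomm_ring
    · intro c v _ hv x2
      rw [smul_lie, map_smul, hv x2, map_smul, smul_sub, smul_mul_assoc, mul_smul_comm]
  set fr : L →ₗ⁅F⁆ Matrix (Fin 3) (Fin 3) F :=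
    { f with
      map_lie' := by
        intro x1 x2
        show f ⁅x1, x2⁆ = ⁅f x1, f x2⁆
        rw [Ring.lie_def]
        exact hbr x1 x2 } with hfr
  set φ : UniversalEnvelopingAlgebra F L →ₐ[F] Matrix (Fin 3) (Fin 3) F :=
    UniversalEnvelopingAlgebra.lift F fr with hφ
  have hφs : φ s = Ym := by
    rw [hφ, hsdef, UniversalEnvelopingAlgebra.lift_ι_apply]
    exact hfy
  have hφt : φ t = Zm := by
    rw [hφ, htdef, UniversalEnvelopingAlgebra.lift_ι_apply]
    exact hfz
  have hYv : Ym *ᵥ ![(1:F),0,0] = ![0,1,0] := by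
    rw [hYm]; exact heisYv F
  have hYe1 : Ym *ᵥ ![(0:F),1,0] = 0 := by
    rw [hYm]; exact heisYe1 F
  have hZv0 : Zm *ᵥ ![(1:F),0,0] = 0 := by
    rw [hZm]; exact heisZv0 F
  have hZe1 : Zm *ᵥ ![(0:F),1,0] = ![0,0,1] := by
    rw [hZm]; exact heisZe1 F
  set ψ : UniversalEnvelopingAlgebra F L →ₗ[F] (Fin 3 → F) :=
    { toFun := fun u => (φ u) *ᵥ ![(1:F),0,0],
      map_add' := fun u w => by simp [Matrix.add_mulVec],
      map_smul' := fun c u => by simp [Matrix.smul_mulVec] } with hψ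
  have hψ1 : ψ 1 = ![(1:F),0,0] := by
    show φ 1 *ᵥ ![(1:F),0,0] = _
    rw [map_one, Matrix.one_mulVec]
  have hψs : ψ s = ![(0:F),1,0] := by
    show φ s *ᵥ ![(1:F),0,0] = _
    rw [hφs, hYv]
  have hψts : ψ (t * s) = ![(0:F),0,1] := by
    show φ (t * s) *ᵥ ![(1:F),0,0] = _
    rw [map_mul, ← Matrix.mulVec_mulVec, hφs, hYv, hφt, hZe1]
  have hψa : ∀ u ∈ a, ψ u = 0 := by
    intro u hu
    refine Submodule.span_induction (p := fun u _ => ψ u = 0) ?_ ?_ ?_ ?_ hu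
    · intro w hw
      simp only [Set.mem_insert_iff, Set.mem_singleton_iff] at hw
      rcases hw with rfl | rfl
      · show φ (s * s) *ᵥ ![(1:F),0,0] = 0
        rw [map_mul, ← Matrix.mulVec_mulVec, hφs, hYv, hYe1]
      · show φ t *ᵥ ![(1:F),0,0] = 0
        rw [hφt, hZv0]
    · simp
    · intro x₁ x₂ _ _ h₁ h₂; rw [map_add, h₁, h₂, add_zero]
    · intro c x _ hx
      have hx' : φ x *ᵥ ![(1:F),0,0] = 0 := hx
      show φ (c * x) *ᵥ ![(1:F),0,0] = 0
      rw [map_mul, ← Matrix.mulVec_mulVec, hx', Matrix.mulVec_zero]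
  -- linear independence of the three images
  have hli : LinearIndependent F
      ![Submodule.Quotient.mk (p := a) 1, Submodule.Quotient.mk (p := a) s,
        Submodule.Quotient.mk (p := a) (t * s)] := by
    rw [Fintype.linearIndependent_iff]
    intro g hg
    have hmem : g 0 • (1 : UniversalEnvelopingAlgebra F L) + g 1 • s + g 2 • (t * s) ∈ a := by
      rw [← Submodule.Quotient.mk_eq_zero a]
      have e : Submodule.Quotient.mk (p := a)
          (g 0 • (1 : UniversalEnvelopingAlgebra F L) + g 1 • s + g 2 • (t * s)) =
          g 0 • Submodule.Quotient.mk (p := a) 1 + g 1 • Submodule.Quotient.mk (p := a) s +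
            g 2 • Submodule.Quotient.mk (p := a) (t * s) := by
        rw [Submodule.Quotient.mk_add, Submodule.Quotient.mk_add,
          Submodule.Quotient.mk_smul, Submodule.Quotient.mk_smul, Submodule.Quotient.mk_smul]
      rw [e]
      simpa [Fin.sum_univ_three] using hg
    have h0 := hψa _ hmem
    rw [map_add, map_add, map_smul, map_smul, map_smul, hψ1, hψs, hψts] at h0
    have e0 := congr_fun h0 0
    have e1 := congr_fun h0 1
    have e2 := congr_fun h0 2
    simp at e0 e1 e2
    intro i; fin_cases i <;> assumption
  have hrange3 : Set.range ![Submodule.Quotient.mk (p := a) 1, Submodule.Quotient.mk (p := a) s,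
      Submodule.Quotient.mk (p := a) (t * s)] =
      {Submodule.Quotient.mk (p := a) 1, Submodule.Quotient.mk (p := a) s,
        Submodule.Quotient.mk (p := a) (t * s)} := by
    ext w
    constructor
    · rintro ⟨i, rfl⟩; fin_cases i <;> simp
    · intro hw
      simp only [Set.mem_insert_iff, Set.mem_singleton_iff] at hw
      rcases hw with rfl | rfl | rfl
      exacts [⟨0, rfl⟩, ⟨1, rfl⟩, ⟨2, rfl⟩]
  have B : Module.Basis (Fin 3) F (UniversalEnvelopingAlgebra F L ⧸ a) :=
    Module.Basis.mk hli (by rw [hrange3, hspan_top])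
  have hfr3 : Module.finrank F (UniversalEnvelopingAlgebra F L ⧸ a) = 3 := by
    rw [Module.finrank_eq_card_basis B]
    simp
  exact ⟨hfr3, hspan_top⟩
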